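/- For any raising operator R = R_{i_1,s_1} R_{i_2,s_2} ⋯ and any ordered dissection A, one has A ≤ R(A) in the dominance order; moreover if ε_A(s_k) > i_k for some k then A < R(A). -/

import Mathlib

/-- An ordered dissection of `{0,…,d-1}` (indexed from 0): a sequence of pairwise
disjoint subsets, vanishing from index `d` on, whose union is everything. -/
def IsDissection (d : ℕ) (A : ℕ → Finset (Fin d)) : Prop :=
  (∀ i j, i ≠ j → Disjoint (A i) (A j)) ∧ (∀ k, d ≤ k → A k = ∅) ∧
    ∀ s : Fin d, ∃ i, s ∈ A i

/-- Dominance order on ordered dissections: each initial union of components of `A`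
is contained in the corresponding one of `B`. -/
def DomD {d : ℕ} (A B : ℕ → Finset (Fin d)) : Prop :=
  ∀ i : ℕ, (Finset.range (i + 1)).biUnion A ⊆ (Finset.range (i + 1)).biUnion B

/-- `eps A s` is the index of the component of `A` containing `s`
(the least such index; it is unique for a dissection). -/
noncomputable def eps {d : ℕ} (A : ℕ → Finset (Fin d)) (s : Fin d) : ℕ :=
  open scoped Classical in
  if h : ∃ i, s ∈ A i then Nat.find h else 0

/-- The simple raising operator `R_{i,s}`: move `s` into component `i`
if `eps A s > i`, otherwise do nothing. -/
noncomputable def Rop {d : ℕ} (i : ℕ) (s : Fin d) (A : ℕ → Finset (Fin d)) : ℕ → Finset (Fin d) :=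
  if eps A s ≤ i then A
  else fun k =>
    if k = i then insert s (A k) else if k = eps A s then (A k).erase s else A k

/-- `φ(A)`: the tuple of component cardinalities. -/
def phi {d : ℕ} (A : ℕ → Finset (Fin d)) : ℕ → ℤ :=
  fun k => ((A k).card : ℤ)

/-- Dominance order on integer tuples: all partial sums of `l` at most those of `m`. -/
def Dom (l m : ℕ → ℤ) : Prop :=
  ∀ i : ℕ, ∑ k ∈ Finset.range (i + 1), l k ≤ ∑ k ∈ Finset.range (i + 1), m k

section Aux
variable {d : ℕ}

lemma eps_le_of_mem {A : ℕ → Finset (Fin d)} {s : Fin d} {k : ℕ} (h : s ∈ A k) :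
    eps A s ≤ k := by
  classical
  have hex : ∃ i, s ∈ A i := ⟨k, h⟩
  simp only [eps, dif_pos hex]
  exact Nat.find_min' hex h

lemma eps_mem {A : ℕ → Finset (Fin d)} (hA : IsDissection d A) (s : Fin d) :
    s ∈ A (eps A s) := by
  classical
  have hex := hA.2.2 s
  simp only [eps, dif_pos hex]
  exact Nat.find_spec hex

lemma mem_iff_eps {A : ℕ → Finset (Fin d)} (hA : IsDissection d A) {s : Fin d} {k : ℕ} :
    s ∈ A k ↔ k = eps A s := by
  constructor
  · intro hk
    by_contra hne
    exact Finset.disjoint_left.mp (hA.1 _ _ hne) hk (eps_mem hA s)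
  · rintro rfl; exact eps_mem hA s

lemma eps_lt {A : ℕ → Finset (Fin d)} (hA : IsDissection d A) (s : Fin d) :
    eps A s < d := by
  by_contra h
  have := eps_mem hA s
  rw [hA.2.1 _ (le_of_not_gt h)] at this
  simp at this

lemma mem_Rop {A : ℕ → Finset (Fin d)} (hA : IsDissection d A) {i : ℕ} {s : Fin d}
    (hact : ¬ eps A s ≤ i) {t : Fin d} {k : ℕ} :
    (t ∈ Rop i s A k) ↔ (if t = s then k = i else t ∈ A k) := by
  classical
  unfold Rop
  rw [if_neg hact]
  by_cases hts : t = s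
  · subst hts
    by_cases hki : k = i
    · subst hki; simp
    · simp only [if_neg hki, if_pos rfl]
      by_cases hke : k = eps A t
      · subst hke; simp [hki]
      · simp only [if_neg hke]
        constructor
        · intro h; exact absurd ((mem_iff_eps hA).mp h) hke
        · intro h; exact absurd h hki
  · by_cases hki : k = i
    · subst hki; simp [hts, Finset.mem_insert]
    · simp only [if_neg hki, if_neg hts]
      by_cases hke : k = eps A s
      · subst hke; simp [hts]
      · simp [hke]

lemma Rop_diss {A : ℕ → Finset (Fin d)} (hA : IsDissection d A) (i : ℕ) (s : Fin d) :
    IsDissection d (Rop i s A) := by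
  classical
  by_cases hact : eps A s ≤ i
  · unfold Rop; rw [if_pos hact]; exact hA
  · have hi : i < d := lt_of_lt_of_le (lt_of_not_ge hact) (le_of_lt (eps_lt hA s))
    refine ⟨?_, ?_, ?_⟩
    · intro j k hjk
      rw [Finset.disjoint_left]
      intro t htj htk
      rw [mem_Rop hA hact] at htj htk
      by_cases hts : t = s
      · rw [if_pos hts] at htj htk; exact hjk (htj.trans htk.symm)
      · rw [if_neg hts] at htj htk
        exact Finset.disjoint_left.mp (hA.1 _ _ hjk) htj htk
    · intro k hk
      rw [Finset.eq_empty_iff_forall_notMem]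
      intro t ht
      rw [mem_Rop hA hact] at ht
      by_cases hts : t = s
      · rw [if_pos hts] at ht; subst ht; exact absurd hk (not_le.mpr hi)
      · rw [if_neg hts] at ht
        rw [hA.2.1 k hk] at ht; simp at ht
    · intro t
      by_cases hts : t = s
      · exact ⟨i, by rw [mem_Rop hA hact, if_pos hts]⟩
      · exact ⟨eps A t, by rw [mem_Rop hA hact, if_neg hts]; exact eps_mem hA t⟩

lemma eps_eq {A : ℕ → Finset (Fin d)} (hA : IsDissection d A) {s : Fin d} {k : ℕ}
    (h : s ∈ A k) : eps A s = k := ((mem_iff_eps hA).mp h).symm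

lemma eps_Rop_self {A : ℕ → Finset (Fin d)} (hA : IsDissection d A) {i : ℕ} {s : Fin d}
    (hact : ¬ eps A s ≤ i) : eps (Rop i s A) s = i :=
  eps_eq (Rop_diss hA i s) (by rw [mem_Rop hA hact]; simp)

lemma eps_Rop_other {A : ℕ → Finset (Fin d)} (hA : IsDissection d A) {i : ℕ} {s t : Fin d}
    (hact : ¬ eps A s ≤ i) (hts : t ≠ s) : eps (Rop i s A) t = eps A t :=
  eps_eq (Rop_diss hA i s) (by rw [mem_Rop hA hact, if_neg hts]; exact eps_mem hA t)

/-- A potential function: the sum of component indices of all elements. -/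
noncomputable def Mw {d : ℕ} (A : ℕ → Finset (Fin d)) : ℕ := ∑ s : Fin d, eps A s

lemma M_Rop_lt {A : ℕ → Finset (Fin d)} (hA : IsDissection d A) {i : ℕ} {s : Fin d}
    (hact : ¬ eps A s ≤ i) : Mw (Rop i s A) < Mw A := by
  apply Finset.sum_lt_sum
  · intro t _
    by_cases hts : t = s
    · subst hts; rw [eps_Rop_self hA hact]; exact le_of_lt (lt_of_not_ge hact)
    · rw [eps_Rop_other hA hact hts]
  · exact ⟨s, Finset.mem_univ s, by rw [eps_Rop_self hA hact]; exact lt_of_not_ge hact⟩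

lemma M_Rop_le {A : ℕ → Finset (Fin d)} (hA : IsDissection d A) (i : ℕ) (s : Fin d) :
    Mw (Rop i s A) ≤ Mw A := by
  by_cases hact : eps A s ≤ i
  · unfold Rop; rw [if_pos hact]
  · exact le_of_lt (M_Rop_lt hA hact)

lemma DomD_Rop (A : ℕ → Finset (Fin d)) (i : ℕ) (s : Fin d) :
    DomD A (Rop i s A) := by
  classical
  by_cases hact : eps A s ≤ i
  · unfold Rop; rw [if_pos hact]; intro j; exact subset_rfl
  · intro j t ht
    rw [Finset.mem_biUnion] at ht ⊢
    obtain ⟨k, hk, htk⟩ := ht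
    rw [Finset.mem_range] at hk
    by_cases hts : t = s
    · subst hts
      have h1 : eps A t ≤ k := eps_le_of_mem htk
      have h2 : ¬ eps A t ≤ i := hact
      refine ⟨i, Finset.mem_range.mpr (by omega), ?_⟩
      simp only [Rop, if_neg hact, if_pos rfl]
      exact Finset.mem_insert_self _ _
    · refine ⟨k, Finset.mem_range.mpr hk, ?_⟩
      simp only [Rop, if_neg hact]
      by_cases hki : k = i
      · subst hki; simp only [if_pos rfl]; exact Finset.mem_insert_of_mem htk
      · rw [if_neg hki]
        by_cases hke : k = eps A s
        · rw [if_pos hke]; exact Finset.mem_erase.mpr ⟨hts, htk⟩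
        · rw [if_neg hke]; exact htk

lemma DomD_trans {A B C : ℕ → Finset (Fin d)} (h1 : DomD A B) (h2 : DomD B C) :
    DomD A C := fun i => (h1 i).trans (h2 i)

lemma fold_diss {A : ℕ → Finset (Fin d)} (hA : IsDissection d A)
    (L : List (ℕ × Fin d)) :
    IsDissection d (L.foldr (fun p B => Rop p.1 p.2 B) A) := by
  induction L with
  | nil => exact hA
  | cons p L ih => exact Rop_diss ih p.1 p.2

lemma M_fold_le {A : ℕ → Finset (Fin d)} (hA : IsDissection d A)
    (L : List (ℕ × Fin d)) :
    Mw (L.foldr (fun p B => Rop p.1 p.2 B) A) ≤ Mw A := by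
  induction L with
  | nil => exact le_rfl
  | cons p L ih => exact (M_Rop_le (fold_diss hA L) p.1 p.2).trans ih

lemma fold_id {A : ℕ → Finset (Fin d)} (L : List (ℕ × Fin d))
    (h : ∀ q ∈ L, eps A q.2 ≤ q.1) :
    L.foldr (fun p B => Rop p.1 p.2 B) A = A := by
  induction L with
  | nil => rfl
  | cons p L ih =>
    have hL : ∀ q ∈ L, eps A q.2 ≤ q.1 := fun q hq => h q (List.mem_cons_of_mem _ hq)
    simp only [List.foldr_cons, ih hL]
    unfold Rop
    rw [if_pos (h p (List.mem_cons_self))]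

lemma M_fold_lt {A : ℕ → Finset (Fin d)} (hA : IsDissection d A)
    (L : List (ℕ × Fin d)) (hex : ∃ p ∈ L, p.1 < eps A p.2) :
    Mw (L.foldr (fun p B => Rop p.1 p.2 B) A) < Mw A := by
  induction L with
  | nil => simp at hex
  | cons p L ih =>
    by_cases hL : ∃ q ∈ L, q.1 < eps A q.2
    · exact lt_of_le_of_lt (M_Rop_le (fold_diss hA L) p.1 p.2) (ih hL)
    · push_neg at hL
      have hid : L.foldr (fun p B => Rop p.1 p.2 B) A = A := fold_id L hL
      have hp : p.1 < eps A p.2 := by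
        obtain ⟨q, hq, hql⟩ := hex
        rcases List.mem_cons.mp hq with rfl | hq'
        · exact hql
        · exact absurd hql (not_lt.mpr (hL q hq'))
      simp only [List.foldr_cons, hid]
      exact M_Rop_lt hA (not_le.mpr hp)

end Aux

/-- For any raising operator `R` (a finite product of simple raising operators,
given as a list of pairs `(i_k, s_k)`) one has `A ≤ R(A)`; if moreover
`ε_A(s_k) > i_k` for some `k`, then `A < R(A)`. -/
theorem stmt8 (d : ℕ) (A : ℕ → Finset (Fin d)) (hA : IsDissection d A)
    (L : List (ℕ × Fin d)) :
    DomD A (L.foldr (fun p B => Rop p.1 p.2 B) A) ∧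
      ((∃ p ∈ L, p.1 < eps A p.2) → L.foldr (fun p B => Rop p.1 p.2 B) A ≠ A) := by
  constructor
  · induction L with
    | nil => intro i; exact subset_rfl
    | cons p L ih => exact DomD_trans ih (DomD_Rop _ p.1 p.2)
  · intro hex heq
    have := M_fold_lt hA L hex
    rw [heq] at this
    exact lt_irrefl _ this
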